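/- Let k ≥ 2 and let (A_1,…,A_k) be a Sperner-admissible partition of Δ_k. Let ε₀ = inf { x_i : i ∈ {1,…,k}, x ∈ A_i }. Then ε₀ > 0, and for every ε with 0 < ε < ε₀/2, the (k−1)-dimensional Hausdorff measure of the ε-neighborhood of the separating set satisfies μ^{k-1}(S_ε) ≥ (1 − (1 − ε√2)^{k−1})·μ^{k-1}(Δ_k), where S = ∪_{i≠j}(A_i ∩ A_j) and S_ε = { x ∈ Δ_k : dist(x, S) ≤ ε }. -/

import Mathlib

open MeasureTheory
open scoped ENNReal NNReal
set_option maxHeartbeats 1000000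

/-- For a Sperner-admissible partition `(A_1,…,A_k)` of `Δ_k` (`k ≥ 2`),
let `ε₀ = inf {x_i : i ∈ [k], x ∈ A_i}`. Then `ε₀ > 0` and for every `0 < ε < ε₀/2`,
`μH^{k-1}(S_ε) ≥ (1 − (1 − ε√2)^{k-1})·μH^{k-1}(Δ_k)`, where `S` is the separating set
and `S_ε = {x ∈ Δ_k : dist(x,S) ≤ ε}`. -/
theorem separating_set_neighborhood_measure_lower_bound (k : ℕ) (hk : 2 ≤ k)
    (A : Fin k → Set (EuclideanSpace ℝ (Fin k)))
    (Δ : Set (EuclideanSpace ℝ (Fin k)))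
    (hΔ : Δ = {x : EuclideanSpace ℝ (Fin k) | (∀ i, 0 ≤ x i) ∧ ∑ i, x i = 1})
    (hclosed : ∀ i, IsClosed (A i))
    (hcover : (⋃ i, A i) = Δ)
    (hbd : ∀ i j, i ≠ j → A i ∩ A j ⊆ frontier (A i) ∩ frontier (A j))
    (hadm : ∀ i, ∀ x ∈ A i, 0 < x i)
    (ε₀ : ℝ) (hε₀ : ε₀ = sInf {r : ℝ | ∃ i : Fin k, ∃ x ∈ A i, r = x i}) :
    0 < ε₀ ∧
    ∀ ε : ℝ, 0 < ε → ε < ε₀ / 2 →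
      ENNReal.ofReal (1 - (1 - ε * Real.sqrt 2) ^ (k - 1)) * μH[(k : ℝ) - 1] Δ ≤
        μH[(k : ℝ) - 1]
          {x ∈ Δ | Metric.infDist x (⋃ (i) (j) (_ : i ≠ j), A i ∩ A j) ≤ ε} := by
  obtain ⟨n, rfl⟩ : ∃ n, k = n + 1 := ⟨k - 1, by omega⟩
  have hn : 1 ≤ n := by omega
  have hcont : ∀ i, Continuous fun x : EuclideanSpace ℝ (Fin (n + 1)) => x i := by
    intro i
    exact (EuclideanSpace.proj (𝕜 := ℝ) i).continuous
  -- Δ is compact and convex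
  have hΔclosed : IsClosed Δ := by
    rw [hΔ]
    have : {x : EuclideanSpace ℝ (Fin (n + 1)) | (∀ i, 0 ≤ x i) ∧ ∑ i, x i = 1} =
        (⋂ i, {x : EuclideanSpace ℝ (Fin (n + 1)) | 0 ≤ x i}) ∩
        {x : EuclideanSpace ℝ (Fin (n + 1)) | ∑ i, x i = 1} := by
      ext x; simp [Set.mem_iInter]
    rw [this]
    apply IsClosed.inter
    · exact isClosed_iInter fun i => isClosed_le continuous_const (hcont i)
    · exact isClosed_eq (continuous_finset_sum _ fun i _ => hcont i) continuous_const
  have hΔbdd : Bornology.IsBounded Δ := by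
    rw [isBounded_iff_forall_norm_le]
    refine ⟨n + 1, fun x hx => ?_⟩
    rw [hΔ] at hx
    obtain ⟨hx0, hx1⟩ := hx
    have hxle : ∀ i, x i ≤ 1 := by
      intro i
      calc x i ≤ ∑ j, x j := Finset.single_le_sum (fun j _ => hx0 j) (Finset.mem_univ i)
        _ = 1 := hx1
    rw [EuclideanSpace.norm_eq]
    have h1 : ∑ i, ‖x i‖ ^ 2 ≤ ∑ _i : Fin (n + 1), (1 : ℝ) := by
      apply Finset.sum_le_sum
      intro i _
      rw [Real.norm_eq_abs, abs_of_nonneg (hx0 i)]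
      nlinarith [hx0 i, hxle i]
    have h2 : Real.sqrt (∑ i, ‖x i‖ ^ 2) ≤ Real.sqrt (n + 1) := by
      apply Real.sqrt_le_sqrt
      simpa using h1
    refine h2.trans ?_
    have : ((n : ℝ) + 1) ≤ ((n : ℝ) + 1) ^ 2 := by nlinarith [Nat.cast_nonneg (α := ℝ) n]
    calc Real.sqrt ((n : ℝ) + 1) ≤ Real.sqrt (((n : ℝ) + 1) ^ 2) := Real.sqrt_le_sqrt this
      _ = (n : ℝ) + 1 := by
          rw [Real.sqrt_sq]; positivity
  have hΔcpt : IsCompact Δ := Metric.isCompact_of_isClosed_isBounded hΔclosed hΔbdd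
  have hΔconv : Convex ℝ Δ := by
    rw [hΔ]
    intro x hx y hy a b ha hb hab
    constructor
    · intro i
      have : (a • x + b • y) i = a * x i + b * y i := rfl
      rw [this]
      have := hx.1 i; have := hy.1 i
      positivity
    · have : ∀ i, (a • x + b • y) i = a * x i + b * y i := fun i => rfl
      simp only [this]
      rw [Finset.sum_add_distrib, ← Finset.mul_sum, ← Finset.mul_sum, hx.2, hy.2]
      simpa using hab
  have hAsub : ∀ i, A i ⊆ Δ := by
    intro i
    rw [← hcover]
    exact Set.subset_iUnion A i
  have hAcpt : ∀ i, IsCompact (A i) := fun i =>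
    hΔcpt.of_isClosed_subset (hclosed i) (hAsub i)
  -- the infimum is attained and positive
  set R : Set ℝ := {r : ℝ | ∃ i : Fin (n + 1), ∃ x ∈ A i, r = x i} with hR
  have hRunion : R = ⋃ i, (fun x : EuclideanSpace ℝ (Fin (n + 1)) => x i) '' A i := by
    ext r
    simp only [hR, Set.mem_setOf_eq, Set.mem_iUnion, Set.mem_image]
    constructor
    · rintro ⟨i, x, hx, rfl⟩; exact ⟨i, x, hx, rfl⟩
    · rintro ⟨i, x, hx, rfl⟩; exact ⟨i, x, hx, rfl⟩
  have hRcpt : IsCompact R := by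
    rw [hRunion]
    exact isCompact_iUnion fun i => (hAcpt i).image (hcont i)
  have hRne : R.Nonempty := by
    have hmem : EuclideanSpace.single (0 : Fin (n + 1)) (1 : ℝ) ∈ Δ := by
      rw [hΔ]
      constructor
      · intro i
        rw [EuclideanSpace.single_apply]
        split <;> norm_num
      · simp [EuclideanSpace.single_apply]
    rw [← hcover] at hmem
    obtain ⟨i, hi⟩ := Set.mem_iUnion.1 hmem
    exact ⟨_, i, _, hi, rfl⟩
  have hε₀mem : ε₀ ∈ R := hε₀ ▸ hRcpt.sInf_mem hRne
  have hε₀pos : 0 < ε₀ := by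
    obtain ⟨i, x, hx, hxi⟩ := hε₀mem
    exact hxi ▸ hadm i x hx
  have hε₀le : ∀ i, ∀ x ∈ A i, ε₀ ≤ x i := by
    intro i x hx
    rw [hε₀]
    apply csInf_le
    · refine ⟨0, fun r hr => ?_⟩
      obtain ⟨j, y, hy, rfl⟩ := hr
      exact (hadm j y hy).le
    · exact ⟨i, x, hx, rfl⟩
  have hε₀one : ε₀ ≤ 1 := by
    obtain ⟨i, x, hx, hxi⟩ := hε₀mem
    have hxΔ := hAsub i hx
    rw [hΔ] at hxΔ
    calc ε₀ = x i := hxi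
      _ ≤ ∑ j, x j := Finset.single_le_sum (fun j _ => hxΔ.1 j) (Finset.mem_univ i)
      _ = 1 := hxΔ.2
  refine ⟨hε₀pos, ?_⟩
  intro ε hε hεlt
  simp only [Nat.add_sub_cancel]
  set S : Set (EuclideanSpace ℝ (Fin (n + 1))) := ⋃ (i) (j) (_ : i ≠ j), A i ∩ A j with hS
  set Sε : Set (EuclideanSpace ℝ (Fin (n + 1))) :=
    {x ∈ Δ | Metric.infDist x S ≤ ε} with hSε
  set c : ℝ := ε * Real.sqrt 2 with hc
  have hsqrt2_sq : Real.sqrt 2 * Real.sqrt 2 = 2 := Real.mul_self_sqrt (by norm_num)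
  have hsqrt2_nonneg : (0:ℝ) ≤ Real.sqrt 2 := Real.sqrt_nonneg 2
  have hsqrt2_lt : Real.sqrt 2 < 2 := by nlinarith
  have hc0 : 0 < c := by
    apply mul_pos hε
    nlinarith
  have hc2ε : c < 2 * ε := by
    rw [hc]; nlinarith
  have hcε₀ : c < ε₀ := by linarith
  have hc1 : c < 1 := lt_of_lt_of_le hcε₀ hε₀one
  have h1c : (0:ℝ) < 1 - c := by linarith
  set d : ℝ := ((n + 1 : ℕ) : ℝ) - 1 with hd
  have hdeq : d = (n : ℝ) := by rw [hd]; push_cast; ring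
  have hd0 : 0 ≤ d := by rw [hdeq]; positivity
  -- the translated-scaled maps
  set E' : Fin (n + 1) → EuclideanSpace ℝ (Fin (n + 1)) :=
    fun i => EuclideanSpace.single i (1:ℝ) with hE'
  set hmap : Fin (n + 1) → EuclideanSpace ℝ (Fin (n + 1)) → EuclideanSpace ℝ (Fin (n + 1)) :=
    fun i y => (1 - c) • y + c • E' i with hhmap
  have hhcont : ∀ i, Continuous (hmap i) := by
    intro i
    exact ((continuous_const_smul _).add continuous_const)
  set P : Fin (n + 1) → Set (EuclideanSpace ℝ (Fin (n + 1))) :=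
    fun i => A i ∩ {x | ε < Metric.infDist x S} with hP
  set Q : Fin (n + 1) → Set (EuclideanSpace ℝ (Fin (n + 1))) :=
    fun i => hmap i ⁻¹' P i with hQ
  have hQmeas : ∀ i, MeasurableSet (Q i) := by
    intro i
    apply MeasurableSet.preimage _ (hhcont i).measurable
    exact (hclosed i).measurableSet.inter
      ((isOpen_lt continuous_const (Metric.continuous_infDist_pt S)).measurableSet)
  have hsurj : ∀ i, Function.Surjective (hmap i) := by
    intro i x
    refine ⟨(1 - c)⁻¹ • (x - c • E' i), ?_⟩
    simp only [hhmap, smul_smul]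
    rw [mul_inv_cancel₀ h1c.ne', one_smul, sub_add_cancel]
  have hPimg : ∀ i, hmap i '' Q i = P i := fun i => Set.image_preimage_eq _ (hsurj i)
  set K0 : NNReal := ⟨1 - c, h1c.le⟩ with hK0
  have hLip : ∀ i, LipschitzWith K0 (hmap i) := by
    intro i
    apply LipschitzWith.of_dist_le_mul
    intro y z
    have h1 : dist (hmap i y) (hmap i z) = dist ((1 - c) • y) ((1 - c) • z) :=
      dist_add_right _ _ _
    rw [h1, dist_smul₀]
    simp only [Real.norm_eq_abs, abs_of_nonneg h1c.le]
    rfl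
  have hQΔ : ∀ i, Q i ⊆ Δ := by
    intro i y hy
    have hx : hmap i y ∈ A i := hy.1
    have hxΔ := hAsub i hx
    rw [hΔ] at hxΔ ⊢
    have hyc : ∀ m, (hmap i y) m = (1 - c) * y m + c * (E' i) m := fun m => rfl
    constructor
    · intro m
      by_cases hm : m = i
      · subst hm
        have hxi : ε₀ ≤ (hmap m y) m := hε₀le m _ hx
        have hsm : (E' m) m = 1 := by simp [hE', EuclideanSpace.single_apply]
        have heq := hyc m
        rw [hsm, mul_one] at heq
        nlinarith [heq, hxi]
      · have hsm : (E' i) m = 0 := by simp [hE', EuclideanSpace.single_apply, hm]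
        have heq := hyc m
        rw [hsm, mul_zero, add_zero] at heq
        have h0 : (0:ℝ) ≤ (hmap i y) m := hxΔ.1 m
        nlinarith [heq, h0]
    · have hsum : ∑ m, (hmap i y) m = 1 := hxΔ.2
      simp only [hyc] at hsum
      rw [Finset.sum_add_distrib, ← Finset.mul_sum, ← Finset.mul_sum] at hsum
      have hsingle : ∑ m, (E' i) m = 1 := by
        simp [hE', EuclideanSpace.single_apply]
      rw [hsingle, mul_one] at hsum
      have : (1 - c) * ∑ m, y m = (1 - c) * 1 := by linarith
      exact mul_left_cancel₀ h1c.ne' this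
  -- distance between two images of the same point
  have hdistE : ∀ i j : Fin (n + 1), i ≠ j → dist (E' i) (E' j) = Real.sqrt 2 := by
    intro i j hij
    rw [EuclideanSpace.dist_eq]
    have hsum : ∑ m, dist (E' i m) (E' j m) ^ 2 = 2 := by
      have hterm : ∀ m, dist (E' i m) (E' j m) ^ 2 =
          (if m = i then (1:ℝ) else 0) + (if m = j then (1:ℝ) else 0) := by
        intro m
        rw [Real.dist_eq, sq_abs]
        simp only [hE', EuclideanSpace.single_apply]
        split_ifs with ha hb hb
        · exact absurd (ha.symm.trans hb) hij
        · norm_num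
        · norm_num
        · norm_num
      rw [Finset.sum_congr rfl fun m _ => hterm m, Finset.sum_add_distrib]
      simp
      norm_num
    rw [hsum]
  have hdistxx : ∀ i j : Fin (n + 1), i ≠ j → ∀ y,
      dist (hmap i y) (hmap j y) = 2 * ε := by
    intro i j hij y
    have hsub : hmap i y - hmap j y = c • (E' i - E' j) := by
      simp only [hhmap, smul_sub]
      abel
    rw [dist_eq_norm, hsub, norm_smul, Real.norm_eq_abs, abs_of_pos hc0,
      ← dist_eq_norm, hdistE i j hij, hc]
    rw [mul_assoc, hsqrt2_sq]
    ring
  have hQdisj : Pairwise (Function.onFun Disjoint Q) := by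
    intro i j hij
    rw [Function.onFun, Set.disjoint_left]
    intro y hyi hyj
    have hxP : hmap i y ∈ P i := hyi
    have hx'P : hmap j y ∈ P j := hyj
    set x := hmap i y with hxdef
    set x' := hmap j y with hx'def
    have hseg : segment ℝ x x' ⊆ Δ :=
      hΔconv.segment_subset (hAsub i hxP.1) (hAsub j hx'P.1)
    set B : Set (EuclideanSpace ℝ (Fin (n + 1))) := ⋃ m ∈ ({i}ᶜ : Set (Fin (n + 1))), A m with hB
    have hBclosed : IsClosed B := (Set.toFinite _).isClosed_biUnion fun m _ => hclosed m
    have hcov2 : segment ℝ x x' ⊆ A i ∪ B := by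
      intro z hz
      have hzΔ := hseg hz
      rw [← hcover] at hzΔ
      obtain ⟨m, hm⟩ := Set.mem_iUnion.1 hzΔ
      by_cases hmi : m = i
      · exact Or.inl (hmi ▸ hm)
      · exact Or.inr (Set.mem_biUnion hmi hm)
    have hnex : (segment ℝ x x' ∩ A i).Nonempty := ⟨x, left_mem_segment ℝ x x', hxP.1⟩
    have hnex' : (segment ℝ x x' ∩ B).Nonempty :=
      ⟨x', right_mem_segment ℝ x x', Set.mem_biUnion hij.symm hx'P.1⟩
    obtain ⟨z, hzseg, hzAi, hzB⟩ :=
      isPreconnected_closed_iff.1 (convex_segment x x').isPreconnected (A i) B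
        (hclosed i) hBclosed hcov2 hnex hnex'
    obtain ⟨m, hmne, hzm⟩ : ∃ m, m ≠ i ∧ z ∈ A m := by
      simpa [hB] using hzB
    have hzS : z ∈ S := by
      rw [hS]
      exact Set.mem_iUnion.2 ⟨i, Set.mem_iUnion.2 ⟨m, Set.mem_iUnion.2
        ⟨hmne.symm, hzAi, hzm⟩⟩⟩
    have h1 : Metric.infDist x S ≤ dist x z := Metric.infDist_le_dist_of_mem hzS
    have h2 : Metric.infDist x' S ≤ dist z x' := by
      rw [dist_comm]
      exact Metric.infDist_le_dist_of_mem hzS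
    have h3 : dist x z + dist z x' = dist x x' := dist_add_dist_of_mem_segment hzseg
    have h4 : dist x x' = 2 * ε := hdistxx i j hij y
    have h5 : ε < Metric.infDist x S := hxP.2
    have h6 : ε < Metric.infDist x' S := hx'P.2
    linarith
  -- finiteness of μH[d] Δ
  have hfin : μH[d] Δ ≠ ⊤ := by
    classical
    let L : EuclideanSpace ℝ (Fin n) →ₗ[ℝ] EuclideanSpace ℝ (Fin (n + 1)) :=
      { toFun := fun y =>
          (WithLp.toLp 2 (fun i : Fin (n + 1) => if h : (i : ℕ) < n then y ⟨i, h⟩ else - ∑ j, y j) :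
            EuclideanSpace ℝ (Fin (n + 1)))
        map_add' := by
          intro y z
          ext i
          by_cases h : (i : ℕ) < n
          · simp [h, PiLp.add_apply]
          · simp [h, PiLp.add_apply, Finset.sum_add_distrib]
            ring
        map_smul' := by
          intro a y
          ext i
          by_cases h : (i : ℕ) < n
          · simp [h, PiLp.smul_apply]
          · simp [h, PiLp.smul_apply, Finset.mul_sum, smul_eq_mul] }
    let Lc := LinearMap.toContinuousLinearMap L
    let v : EuclideanSpace ℝ (Fin (n + 1)) := WithLp.toLp 2 (fun i : Fin (n + 1) => if (i : ℕ) < n then (0:ℝ) else 1)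
    let f : EuclideanSpace ℝ (Fin n) → EuclideanSpace ℝ (Fin (n + 1)) := fun y => Lc y + v
    have hfLip : LipschitzWith ‖Lc‖₊ f := by
      apply LipschitzWith.of_dist_le_mul
      intro y z
      have h1 : dist (f y) (f z) = dist (Lc y) (Lc z) := dist_add_right _ _ _
      rw [h1]
      exact Lc.lipschitz.dist_le_mul y z
    have hsubset : Δ ⊆ f '' Metric.closedBall 0 (n : ℝ) := by
      intro x hx
      rw [hΔ] at hx
      have hle1 : ∀ m : Fin (n + 1), x m ≤ 1 := fun m =>
        hx.2 ▸ Finset.single_le_sum (fun j _ => hx.1 j) (Finset.mem_univ m)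
      refine ⟨(WithLp.toLp 2 (fun j => x (Fin.castSucc j)) : EuclideanSpace ℝ (Fin n)), ?_, ?_⟩
      · rw [Metric.mem_closedBall, dist_zero_right, EuclideanSpace.norm_eq]
        have hn1 : (1:ℝ) ≤ (n : ℝ) := by exact_mod_cast hn
        have hsum : ∑ j : Fin n, ‖x (Fin.castSucc j)‖ ^ 2 ≤ (n : ℝ) := by
          calc ∑ j : Fin n, ‖x (Fin.castSucc j)‖ ^ 2 ≤ ∑ _j : Fin n, (1:ℝ) := by
                apply Finset.sum_le_sum
                intro j _
                rw [Real.norm_eq_abs, abs_of_nonneg (hx.1 _)]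
                nlinarith [hx.1 (Fin.castSucc j), hle1 (Fin.castSucc j)]
            _ = (n : ℝ) := by simp
        calc Real.sqrt (∑ j : Fin n, ‖x (Fin.castSucc j)‖ ^ 2) ≤ Real.sqrt (n : ℝ) :=
              Real.sqrt_le_sqrt hsum
          _ ≤ Real.sqrt ((n : ℝ) ^ 2) := by
              apply Real.sqrt_le_sqrt
              nlinarith
          _ = (n : ℝ) := by
              rw [Real.sqrt_sq (by positivity)]
      · ext i
        have happ : f (WithLp.toLp 2 (fun j => x (Fin.castSucc j)) : EuclideanSpace ℝ (Fin n)) i =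
            (if h : (i : ℕ) < n then x (Fin.castSucc ⟨(i : ℕ), h⟩)
              else - ∑ j : Fin n, x (Fin.castSucc j)) + (if (i : ℕ) < n then 0 else 1) := rfl
        rw [happ]
        by_cases h : (i : ℕ) < n
        · rw [dif_pos h, if_pos h, add_zero]
          rfl
        · rw [dif_neg h, if_neg h]
          have hsum1 : ∑ j : Fin n, x (Fin.castSucc j) + x (Fin.last n) = 1 := by
            rw [← Fin.sum_univ_castSucc]
            exact hx.2
          have hi : i = Fin.last n := by
            apply Fin.ext
            have := i.isLt
            simp only [Fin.val_last]
            omega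
          rw [hi]
          linarith
    have h1 : μH[d] Δ ≤ μH[d] (f '' Metric.closedBall 0 (n : ℝ)) := measure_mono hsubset
    have h2 := hfLip.hausdorffMeasure_image_le hd0 (Metric.closedBall 0 (n : ℝ))
    have h3 : μH[d] (Metric.closedBall (0 : EuclideanSpace ℝ (Fin n)) (n : ℝ)) < ⊤ := by
      have hrk : d = ((Module.finrank ℝ (EuclideanSpace ℝ (Fin n)) : ℕ) : ℝ) := by
        rw [hdeq, finrank_euclideanSpace_fin]
      rw [hrk]
      exact (isCompact_closedBall _ _).measure_lt_top
    refine ne_of_lt (lt_of_le_of_lt (h1.trans h2) ?_)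
    exact ENNReal.mul_lt_top (ENNReal.rpow_lt_top_of_nonneg hd0 ENNReal.coe_ne_top) h3
  -- the main measure computation
  have hK0coe : (K0 : ℝ≥0∞) = ENNReal.ofReal (1 - c) :=
    (ENNReal.ofReal_eq_coe_nnreal h1c.le).symm
  have hrpow : (K0 : ℝ≥0∞) ^ d = ENNReal.ofReal ((1 - c) ^ n) := by
    rw [hK0coe, hdeq, ENNReal.ofReal_rpow_of_pos h1c, Real.rpow_natCast]
  have hPle : ∀ i, μH[d] (P i) ≤ ENNReal.ofReal ((1 - c) ^ n) * μH[d] (Q i) := by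
    intro i
    have h := (hLip i).hausdorffMeasure_image_le hd0 (Q i)
    rw [hPimg i, hrpow] at h
    exact h
  have hQle : ∑ i, μH[d] (Q i) ≤ μH[d] Δ := by
    calc ∑ i, μH[d] (Q i) = ∑' i, μH[d] (Q i) := (tsum_fintype _).symm
      _ = μH[d] (⋃ i, Q i) := (measure_iUnion hQdisj hQmeas).symm
      _ ≤ μH[d] Δ := measure_mono (Set.iUnion_subset hQΔ)
  have hDS : Δ \ Sε ⊆ ⋃ i, P i := by
    intro x hx
    obtain ⟨hxΔ, hxS⟩ := hx
    have hxA : x ∈ ⋃ i, A i := hcover ▸ hxΔ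
    obtain ⟨i, hi⟩ := Set.mem_iUnion.1 hxA
    refine Set.mem_iUnion.2 ⟨i, hi, ?_⟩
    simp only [Set.mem_setOf_eq]
    by_contra h
    push_neg at h
    exact hxS ⟨hxΔ, h⟩
  have hmain : μH[d] Δ ≤ μH[d] Sε + ENNReal.ofReal ((1 - c) ^ n) * μH[d] Δ := by
    calc μH[d] Δ ≤ μH[d] (Sε ∪ (Δ \ Sε)) := by
          apply measure_mono
          intro x hx
          by_cases hxs : x ∈ Sε
          · exact Or.inl hxs
          · exact Or.inr ⟨hx, hxs⟩
      _ ≤ μH[d] Sε + μH[d] (Δ \ Sε) := measure_union_le _ _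
      _ ≤ μH[d] Sε + ∑ i, μH[d] (P i) := by
          gcongr
          calc μH[d] (Δ \ Sε) ≤ μH[d] (⋃ i, P i) := measure_mono hDS
            _ ≤ ∑' i, μH[d] (P i) := measure_iUnion_le _
            _ = ∑ i, μH[d] (P i) := tsum_fintype _
      _ ≤ μH[d] Sε + ∑ i, ENNReal.ofReal ((1 - c) ^ n) * μH[d] (Q i) := by
          gcongr with i
          exact hPle i
      _ = μH[d] Sε + ENNReal.ofReal ((1 - c) ^ n) * ∑ i, μH[d] (Q i) := by
          rw [Finset.mul_sum]
      _ ≤ μH[d] Sε + ENNReal.ofReal ((1 - c) ^ n) * μH[d] Δ := by gcongr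
  have hr0 : (0:ℝ) ≤ (1 - c) ^ n := by positivity
  have hr1 : (1 - c) ^ n ≤ 1 := pow_le_one₀ h1c.le (by linarith)
  have hsplit : ENNReal.ofReal (1 - (1 - c) ^ n) * μH[d] Δ
      + ENNReal.ofReal ((1 - c) ^ n) * μH[d] Δ = μH[d] Δ := by
    rw [← add_mul, ← ENNReal.ofReal_add (by linarith) hr0]
    norm_num
  have hfin2 : ENNReal.ofReal ((1 - c) ^ n) * μH[d] Δ ≠ ⊤ :=
    ENNReal.mul_ne_top ENNReal.ofReal_ne_top hfin
  have hkey : ENNReal.ofReal (1 - (1 - c) ^ n) * μH[d] Δ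
      + ENNReal.ofReal ((1 - c) ^ n) * μH[d] Δ
      ≤ μH[d] Sε + ENNReal.ofReal ((1 - c) ^ n) * μH[d] Δ := by
    rw [hsplit]
    exact hmain
  exact (ENNReal.add_le_add_iff_right hfin2).1 hkey
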